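/- Consider the LTV error recursion Δx_{k+1} ∈ {A_k Δx_k + B_k Δu_k} ⊕ Σ_k·B_∞ with Δu_k = ψᵘ_k + Σ_{j<k} K_{k,j}(Δx_j − ψˣ_j), where ψˣ, ψᵘ satisfy ψˣ_{k+1} = A_k ψˣ_k + B_k ψᵘ_k with ψˣ_0 = Δx_0. If the matrices Φˣ, Φᵘ satisfy Φˣ_{j+1,j} = Σ_j, Φˣ_{k+1,j} = A_k Φˣ_{k,j} + B_k Φᵘ_{k,j}, and Φᵘ_{k,j} = Σ_{i} K_{k,i} Φˣ_{i,j} appropriately, then for every admissible disturbance sequence, Δx_k ∈ {ψˣ_k} ⊕ ⊕_{j=0}^{k−1} Φˣ_{k,j}·B_∞ and Δu_k ∈ {ψᵘ_k} ⊕ ⊕_{j=0}^{k−1} Φᵘ_{k,j}·B_∞. -/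

import Mathlib

open Matrix Finset


private lemma mulVec_sum' {n m R : Type*} [Fintype m] [NonUnitalNonAssocSemiring R]
    {ι : Type*} (s : Finset ι) (M : Matrix n m R) (f : ι → m → R) :
    M.mulVec (∑ i ∈ s, f i) = ∑ i ∈ s, M.mulVec (f i) := by
  classical
  induction s using Finset.induction with
  | empty => simp
  | insert _ _ h ih => simp [Finset.sum_insert h, Matrix.mulVec_add, ih]

private lemma sum_mulVec' {n m R : Type*} [Fintype m] [NonUnitalNonAssocSemiring R]
    {ι : Type*} (s : Finset ι) (M : ι → Matrix n m R) (v : m → R) :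
    (∑ i ∈ s, M i).mulVec v = ∑ i ∈ s, (M i).mulVec v := by
  classical
  induction s using Finset.induction with
  | empty => simp
  | insert _ _ h ih => simp [Finset.sum_insert h, Matrix.add_mulVec, ih]

/-- System-level parameterization of the LTV error recursion with disturbance
feedback: the error state and input lie in the tubes generated by the system
responses `Φˣ`, `Φᵘ`. -/
theorem sls_reachable_tube
    {n m : ℕ}
    (A : ℕ → Matrix (Fin n) (Fin n) ℝ) (B : ℕ → Matrix (Fin n) (Fin m) ℝ)
    (Sig : ℕ → Matrix (Fin n) (Fin n) ℝ)
    (K : ℕ → ℕ → Matrix (Fin m) (Fin n) ℝ)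
    (ψx : ℕ → Fin n → ℝ) (ψu : ℕ → Fin m → ℝ)
    (Φx : ℕ → ℕ → Matrix (Fin n) (Fin n) ℝ)
    (Φu : ℕ → ℕ → Matrix (Fin m) (Fin n) ℝ)
    (w : ℕ → Fin n → ℝ) (Δx : ℕ → Fin n → ℝ) (Δu : ℕ → Fin m → ℝ)
    -- admissible disturbances
    (hw : ∀ k, ‖w k‖ ≤ 1)
    -- auxiliary nominal error dynamics
    (hψ : ∀ k, ψx (k + 1) = (A k).mulVec (ψx k) + (B k).mulVec (ψu k))
    -- disturbance feedback control law
    (hΔu : ∀ k, Δu k = ψu k + ∑ j ∈ range k, (K k j).mulVec (Δx j - ψx j))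
    -- true error dynamics, with uncertainty realization Σ_k w_k
    (hΔx0 : Δx 0 = ψx 0)
    (hΔx : ∀ k, Δx (k + 1) =
      (A k).mulVec (Δx k) + (B k).mulVec (Δu k) + (Sig k).mulVec (w k))
    -- system response recursion
    (hΦdiag : ∀ j, Φx (j + 1) j = Sig j)
    (hΦrec : ∀ j k, j < k →
      Φx (k + 1) j = A k * Φx k j + B k * Φu k j)
    (hΦu : ∀ j k, j < k →
      Φu k j = ∑ i ∈ Ioo j k, K k i * Φx i j) :
    ∀ k, ∃ d : ℕ → Fin n → ℝ, (∀ j, ‖d j‖ ≤ 1) ∧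
      Δx k = ψx k + ∑ j ∈ range k, (Φx k j).mulVec (d j) ∧
      Δu k = ψu k + ∑ j ∈ range k, (Φu k j).mulVec (d j) := by
  -- the input formula follows from the state formulas at earlier times
  have hUaux : ∀ k, (∀ i, i < k →
      Δx i = ψx i + ∑ j ∈ range i, (Φx i j).mulVec (w j)) →
      Δu k = ψu k + ∑ j ∈ range k, (Φu k j).mulVec (w j) := by
    intro k hx
    rw [hΔu]
    congr 1
    calc ∑ i ∈ range k, (K k i).mulVec (Δx i - ψx i)
        = ∑ i ∈ range k, ∑ j ∈ range i, (K k i * Φx i j).mulVec (w j) := by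
          refine Finset.sum_congr rfl fun i hi => ?_
          rw [hx i (mem_range.mp hi)]
          simp [mulVec_sum', Matrix.mulVec_mulVec]
      _ = ∑ j ∈ range k, ∑ i ∈ Ioo j k, (K k i * Φx i j).mulVec (w j) := by
          rw [Finset.sum_sigma', Finset.sum_sigma']
          apply Finset.sum_nbij' (fun p => ⟨p.2, p.1⟩) (fun p => ⟨p.2, p.1⟩) <;>
            simp +contextual [Sigma.ext_iff, mem_Ioo, mem_range] <;> omega
      _ = ∑ j ∈ range k, (Φu k j).mulVec (w j) := by
          refine Finset.sum_congr rfl fun j hj => ?_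
          rw [hΦu j k (mem_range.mp hj), sum_mulVec']
  -- state formula by strong induction
  have hX : ∀ k, Δx k = ψx k + ∑ j ∈ range k, (Φx k j).mulVec (w j) := by
    intro k
    induction k using Nat.strong_induction_on with
    | _ k ih =>
      match k with
      | 0 => simpa using hΔx0
      | Nat.succ k =>
        have hxk := ih k (Nat.lt_succ_self k)
        have hU := hUaux k (fun i hi => ih i (hi.trans (Nat.lt_succ_self k)))
        rw [hΔx k, hxk, hU, hψ k, Finset.sum_range_succ, hΦdiag k,
          Matrix.mulVec_add, Matrix.mulVec_add, mulVec_sum',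
          mulVec_sum']
        have hs : ∀ j ∈ range k,
            (A k).mulVec ((Φx k j).mulVec (w j)) + (B k).mulVec ((Φu k j).mulVec (w j))
            = (Φx (k + 1) j).mulVec (w j) := by
          intro j hj
          rw [hΦrec j k (mem_range.mp hj), Matrix.add_mulVec,
            Matrix.mulVec_mulVec, Matrix.mulVec_mulVec]
        rw [← Finset.sum_congr rfl hs, Finset.sum_add_distrib]
        abel
  intro k
  exact ⟨w, hw, hX k, hUaux k (fun i _ => hX i)⟩
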